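/- Let r ≥ 1 and let F be a non-decreasing class of functions with |F| ≥ 2. Then opt_weak(CART_r(F)) < (r+1)·ln(|F|). -/

import Mathlib

/-- `GuessForce ok V m` means: in the mistake-bound game with weak (yes/no) reinforcement
where queries have type `Q`, guesses have type `A`, and `ok q g f` says that guess `g` is a
correct answer to query `q` when the hidden target is `f`, an (adaptive) adversary whose
answers must stay consistent with some member of the current version space `V` can force
every deterministic learner to be answered "no" at least `m` times.
At each step the adversary chooses a query `q` and, depending on the learner's guess `g`,
either answers "no" (`c g = true`, one more mistake, continuing from the consistent
functions for which the guess is wrong) or answers "yes" (`c g = false`, continuing from the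
consistent functions for which the guess is correct). -/
inductive GuessForce {α Q A : Type*} (ok : Q → A → α → Prop) : Set α → ℕ → Prop where
  | zero (V : Set α) : V.Nonempty → GuessForce ok V 0
  | step (V : Set α) (m : ℕ) (q : Q) (c : A → Bool)
      (hne : ∀ g : A, (if c g then {f ∈ V | ¬ ok q g f} else {f ∈ V | ok q g f}).Nonempty)
      (h : ∀ g : A, GuessForce ok (if c g then {f ∈ V | ¬ ok q g f} else {f ∈ V | ok q g f})
        (if c g then m else m + 1)) :
      GuessForce ok V (m + 1)

/-- `opt_weak(CART_r(F))`: the optimal worst-case number of mistakes in the `r`-input weak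
reinforcement model, where in each round the adversary presents `r` inputs simultaneously,
the learner guesses all `r` outputs, and is only told whether all `r` guesses are correct. -/
noncomputable def optWeakCart {X Y : Type*} (r : ℕ) (F : Set (X → Y)) : ℕ :=
  sSup {m | GuessForce (fun (x : Fin r → X) (g : Fin r → Y) f => ∀ i, f (x i) = g i) F m}

/-- Let `r ≥ 1` and let `F` be a non-decreasing class of functions (a family
of monotone functions from a finite linearly ordered set `X` to `{0,1}`) with `|F| ≥ 2`.
Then `opt_weak(CART_r(F)) < (r+1)·ln |F|`. -/
lemma mono_comparable {X : Type*} [LinearOrder X] (f g : X → Bool)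
    (hf : Monotone f) (hg : Monotone g) : f ≤ g ∨ g ≤ f := by
  by_contra hc
  push_neg at hc
  obtain ⟨⟨a, ha⟩, ⟨b, hb⟩⟩ : (∃ a, ¬ f a ≤ g a) ∧ ∃ b, ¬ g b ≤ f b := by
    constructor
    · by_contra h'; push_neg at h'; exact hc.1 h'
    · by_contra h'; push_neg at h'; exact hc.2 h'
  have ha' : g a < f a := lt_of_not_ge ha
  have hb' : f b < g b := lt_of_not_ge hb
  rcases le_total a b with h | h
  · have h1 := hf h
    revert h1 ha' hb'
    cases f a <;> cases f b <;> cases g a <;> cases g b <;> decide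
  · have h1 := hg h
    revert h1 ha' hb'
    cases f a <;> cases f b <;> cases g a <;> cases g b <;> decide

lemma chain_card_le (r : ℕ) (T : Finset (Fin r → Bool))
    (hT : ∀ u ∈ T, ∀ v ∈ T, u ≤ v ∨ v ≤ u) : T.card ≤ r + 1 := by
  classical
  have key : ∀ u v : Fin r → Bool, u ≤ v →
      (Finset.univ.filter fun i => u i = true).card = (Finset.univ.filter fun i => v i = true).card
      → u = v := by
    intro u v huv' hcard
    have hsub : (Finset.univ.filter fun i => u i = true) ⊆ (Finset.univ.filter fun i => v i = true) := by
      intro i hi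
      simp only [Finset.mem_filter, Finset.mem_univ, true_and] at *
      have h2 := huv' i
      revert h2 hi
      cases u i <;> cases v i <;> simp [Bool.le_iff_imp]
    have heq := Finset.eq_of_subset_of_card_le hsub (le_of_eq hcard.symm)
    funext i
    have hiff : (u i = true) ↔ (v i = true) := by
      constructor
      · intro h'; have hm : i ∈ Finset.univ.filter fun i => u i = true := by simp [h']
        rw [heq] at hm; simpa using hm
      · intro h'; have hm : i ∈ Finset.univ.filter fun i => v i = true := by simp [h']
        rw [← heq] at hm; simpa using hm
    revert hiff
    cases u i <;> cases v i <;> simp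
  have hinj : Set.InjOn (fun v : Fin r → Bool => (Finset.univ.filter fun i => v i = true).card) ↑T := by
    intro u hu v hv huv
    simp only at huv
    rcases hT u (by simpa using hu) v (by simpa using hv) with h | h
    · exact key u v h huv
    · exact (key v u h huv.symm).symm
  calc T.card = (T.image fun v : Fin r → Bool => (Finset.univ.filter fun i => v i = true).card).card :=
        (Finset.card_image_of_injOn hinj).symm
    _ ≤ (Finset.range (r+1)).card := by
        apply Finset.card_le_card
        intro n hn
        simp only [Finset.mem_image] at hn
        obtain ⟨v, _, rfl⟩ := hn
        simp only [Finset.mem_range, Nat.lt_succ_iff]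
        calc (Finset.univ.filter fun i => v i = true).card ≤ Finset.univ.card := Finset.card_filter_le _ _
          _ = r := by simp
    _ = r + 1 := by simp

lemma key_bound {X : Type*} [Fintype X] [LinearOrder X] (r : ℕ) (hr : 1 ≤ r)
    (V : Set (X → Bool)) (m : ℕ)
    (h : GuessForce (fun (x : Fin r → X) (g : Fin r → Bool) f => ∀ i, f (x i) = g i) V m) :
    (∀ f ∈ V, Monotone f) → ((r + 1 : ℝ) / r) ^ m ≤ V.ncard := by
  have hrpos : (0:ℝ) < r := by exact_mod_cast hr
  induction h with
  | zero V hV =>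
    intro _
    simpa using (Nat.one_le_cast (α := ℝ)).mpr ((Set.ncard_pos (Set.toFinite V)).mpr hV)
  | step V m q c hne h ih =>
    intro hmono
    classical
    have hVfin : V.Finite := Set.toFinite V
    set p : (X → Bool) → (Fin r → Bool) := fun f i => f (q i) with hp
    set Vf : Finset (X → Bool) := hVfin.toFinset with hVfdef
    have hVf : ↑Vf = V := hVfin.coe_toFinset
    have hVcard : V.ncard = Vf.card := by rw [← hVf, Set.ncard_coe_finset]
    have hVne : V.Nonempty := by
      rcases hne (fun _ => false) with ⟨f, hf⟩
      split at hf
      · exact ⟨f, hf.1⟩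
      · exact ⟨f, hf.1⟩
    have hVfne : Vf.Nonempty := by rwa [← hVf, Finset.coe_nonempty] at hVne
    set T : Finset (Fin r → Bool) := Vf.image p with hT
    have hTne : T.Nonempty := hVfne.image p
    have hTcard : T.card ≤ r + 1 := by
      apply chain_card_le
      intro u hu v hv
      simp only [hT, Finset.mem_image] at hu hv
      obtain ⟨f, hf, rfl⟩ := hu
      obtain ⟨g, hg, rfl⟩ := hv
      have hf' : f ∈ V := by rw [← hVf]; exact_mod_cast hf
      have hg' : g ∈ V := by rw [← hVf]; exact_mod_cast hg
      rcases mono_comparable f g (hmono f hf') (hmono g hg') with hle | hle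
      · exact Or.inl (fun i => hle (q i))
      · exact Or.inr (fun i => hle (q i))
    -- max fiber
    obtain ⟨g₀, hg₀T, hmax⟩ := T.exists_max_image (fun y => (Vf.filter fun f => p f = y).card) hTne
    set B : Finset (X → Bool) := Vf.filter fun f => p f = g₀ with hB
    have hpig : (Vf.card : ℝ) ≤ (r + 1) * B.card := by
      have hsum : Vf.card = ∑ y ∈ T, (Vf.filter fun f => p f = y).card :=
        Finset.card_eq_sum_card_fiberwise (fun f hf => Finset.mem_image_of_mem p hf)
      have : Vf.card ≤ (r + 1) * B.card := by
        calc Vf.card = ∑ y ∈ T, (Vf.filter fun f => p f = y).card := hsum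
          _ ≤ ∑ _y ∈ T, B.card := Finset.sum_le_sum (fun y hy => hmax y hy)
          _ = T.card * B.card := by rw [Finset.sum_const, smul_eq_mul]
          _ ≤ (r + 1) * B.card := Nat.mul_le_mul_right _ hTcard
      exact_mod_cast this
    -- translate ok-sets to filters
    have hok : ∀ f : X → Bool, (∀ i, f (q i) = g₀ i) ↔ p f = g₀ := by
      intro f; exact funext_iff.symm
    have hYset : {f ∈ V | ∀ i, f (q i) = g₀ i} = ↑B := by
      ext f
      simp only [hB, Finset.coe_filter, Set.mem_setOf_eq, Set.mem_sep_iff, ← hVf, Finset.mem_coe, hok]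
    have hNset : {f ∈ V | ¬ ∀ i, f (q i) = g₀ i} = ↑(Vf.filter fun f => ¬ p f = g₀) := by
      ext f
      simp only [Finset.coe_filter, Set.mem_setOf_eq, Set.mem_sep_iff, ← hVf, Finset.mem_coe, hok]
    have hmono' : ∀ W : Set (X → Bool), W ⊆ V → ∀ f ∈ W, Monotone f := fun W hW f hf => hmono f (hW hf)
    cases hc : c g₀ with
    | false =>
      have ihg := ih g₀
      rw [hc] at ihg
      simp only [Bool.false_eq_true, if_false] at ihg
      have hbound := ihg (hmono' _ (Set.sep_subset _ _))
      calc ((r+1:ℝ)/r) ^ (m+1) ≤ {f ∈ V | ∀ i, f (q i) = g₀ i}.ncard := hbound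
        _ ≤ (V.ncard : ℝ) := by
            exact_mod_cast Set.ncard_le_ncard (Set.sep_subset _ _) hVfin
    | true =>
      have ihg := ih g₀
      rw [hc] at ihg
      simp only [if_true] at ihg
      have hbound := ihg (hmono' _ (Set.sep_subset _ _))
      set N : Finset (X → Bool) := Vf.filter fun f => ¬ p f = g₀ with hNdef
      have hNcard : ({f ∈ V | ¬ ∀ i, f (q i) = g₀ i}).ncard = N.card := by
        rw [hNset, Set.ncard_coe_finset]
      rw [hNcard] at hbound
      have hsplit : B.card + N.card = Vf.card :=
        Finset.card_filter_add_card_filter_not _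
      -- real arithmetic
      have hq1 : (0:ℝ) < (r+1)/r := by positivity
      have hBc : (0:ℝ) ≤ B.card := by positivity
      have hNle : (N.card : ℝ) * ((r+1)/r) ≤ Vf.card := by
        have h1 : (B.card : ℝ) + N.card = Vf.card := by exact_mod_cast hsplit
        have h2 : (N.card:ℝ) * (r+1) ≤ Vf.card * r := by nlinarith [hpig, h1]
        calc (N.card:ℝ) * ((r+1)/r) = (N.card * (r+1))/r := by ring
          _ ≤ (Vf.card * r)/r := by apply div_le_div_of_nonneg_right h2 hrpos.le
          _ = Vf.card := by field_simp
      calc ((r+1:ℝ)/r) ^ (m+1) = ((r+1:ℝ)/r) ^ m * ((r+1)/r) := by ring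
        _ ≤ (N.card : ℝ) * ((r+1)/r) := by
            apply mul_le_mul_of_nonneg_right hbound (le_of_lt hq1)
        _ ≤ (Vf.card : ℝ) := hNle
        _ = (V.ncard : ℝ) := by rw [hVcard]

theorem stmt0 {X : Type*} [Fintype X] [LinearOrder X] (r : ℕ) (hr : 1 ≤ r)
    (F : Set (X → Bool)) (hmono : ∀ f ∈ F, Monotone f) (hF : 2 ≤ F.ncard) :
    (optWeakCart r F : ℝ) < ((r : ℝ) + 1) * Real.log F.ncard := by
  classical
  have hrpos : (0:ℝ) < r := by exact_mod_cast hr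
  have hr1 : (0:ℝ) < (r:ℝ) + 1 := by linarith
  set S := {m | GuessForce (fun (x : Fin r → X) (g : Fin r → Bool) f => ∀ i, f (x i) = g i) F m}
    with hS
  have hn2 : (2:ℝ) ≤ (F.ncard : ℝ) := by exact_mod_cast hF
  have hlogn : 0 < Real.log (F.ncard : ℝ) := Real.log_pos (by linarith)
  have hFne : F.Nonempty := by
    rcases Set.eq_empty_or_nonempty F with h | h
    · simp [h] at hF
    · exact h
  have h0 : 0 ∈ S := GuessForce.zero F hFne
  have hb : ∀ m ∈ S, ((r+1:ℝ)/r)^m ≤ (F.ncard : ℝ) := fun m hm => key_bound r hr F m hm hmono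
  have hqeq : ((r:ℝ)+1)/r = 1 + 1/r := by field_simp
  have hbdd : BddAbove S := by
    refine ⟨r * F.ncard, fun m hm => ?_⟩
    have h1 := hb m hm
    have h2 : 1 + (m:ℝ) * (1/r) ≤ ((r+1:ℝ)/r)^m := by
      rw [hqeq]
      have hnn : (0:ℝ) ≤ 1/(r:ℝ) := by positivity
      exact one_add_mul_le_pow (by linarith) m
    have h3 : (m:ℝ) ≤ r * F.ncard := by
      have : (m:ℝ) * (1/r) ≤ F.ncard := by linarith
      rw [mul_one_div, div_le_iff₀ hrpos] at this
      nlinarith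
    exact_mod_cast h3
  have hM : sSup S ∈ S := Nat.sSup_mem ⟨0, h0⟩ hbdd
  have hMO : optWeakCart r F = sSup S := rfl
  set M := sSup S with hMdef
  have hMb := hb M hM
  -- log((r+1)/r) > 1/(r+1)
  have hkey : 1/((r:ℝ)+1) < Real.log (((r:ℝ)+1)/r) := by
    have hx : -(1/((r:ℝ)+1)) ≠ 0 := neg_ne_zero.mpr (by positivity)
    have h1 := Real.add_one_lt_exp hx
    have hpos : (0:ℝ) < (r:ℝ)/(r+1) := by positivity
    have h2 : (r:ℝ)/(r+1) < Real.exp (-(1/((r:ℝ)+1))) := by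
      have heq : (r:ℝ)/(r+1) = -(1/((r:ℝ)+1)) + 1 := by field_simp; ring
      rw [heq]; exact h1
    have h3 := Real.log_lt_log hpos h2
    rw [Real.log_exp] at h3
    have h4 : Real.log ((r:ℝ)/(r+1)) = Real.log r - Real.log (r+1) :=
      Real.log_div (by positivity) (by positivity)
    have h5 : Real.log (((r:ℝ)+1)/r) = Real.log (r+1) - Real.log r :=
      Real.log_div (by positivity) (by positivity)
    rw [h4] at h3
    rw [h5]
    linarith
  have hqgt1 : (1:ℝ) < ((r:ℝ)+1)/r := by rw [lt_div_iff₀ hrpos]; linarith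
  have hMlog : (M:ℝ) * Real.log (((r:ℝ)+1)/r) ≤ Real.log (F.ncard : ℝ) := by
    have := Real.log_le_log (by positivity) hMb
    rwa [Real.log_pow] at this
  rw [hMO]
  rcases Nat.eq_zero_or_pos M with hM0 | hM0
  · rw [hM0]
    push_cast
    positivity
  · have hMpos : (0:ℝ) < M := by exact_mod_cast hM0
    have h1 : (M:ℝ) * (1/((r:ℝ)+1)) < (M:ℝ) * Real.log (((r:ℝ)+1)/r) :=
      mul_lt_mul_of_pos_left hkey hMpos
    have h2 : (M:ℝ) * (1/((r:ℝ)+1)) < Real.log (F.ncard : ℝ) := lt_of_lt_of_le h1 hMlog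
    rw [mul_one_div, div_lt_iff₀ hr1] at h2
    linarith
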